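/- For a reversible irreducible Markov kernel K on a finite state space with strictly positive stationary density f, the convergence bound 2·‖Kⁿ(x,·) − f‖_TV ≤ f(x)^{−1/2}·βⁿ holds, where β = max{|β_min|, β₁} and β_min ≤ ... ≤ β₁ < β₀ = 1 are the eigenvalues of K viewed as a self-adjoint operator on L²(f), and ‖μ − ν‖_TV = (1/2)∑_y |μ(y) − ν(y)|. -/

import Mathlib

open Matrix in
/-- Spectral bound: for a real symmetric matrix with all eigenvalues of modulus ≤ β,
diagonal entries of even powers are bounded by β^(2k). -/
lemma diag_even_pow_bound {S : Type*} [Fintype S] [DecidableEq S]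
    (A : Matrix S S ℝ) (hA : A.IsHermitian) (β : ℝ) (hβ0 : 0 ≤ β)
    (heig : ∀ (μ : ℝ) (g : S → ℝ), g ≠ 0 → A *ᵥ g = μ • g → |μ| ≤ β)
    (k : ℕ) (x : S) : (A ^ k * A ^ k) x x ≤ (β ^ k) ^ 2 := by
  classical
  set U : Matrix S S ℝ := (hA.eigenvectorUnitary : Matrix S S ℝ) with hU
  have hU2 : star U * U = 1 := Matrix.mem_unitaryGroup_iff'.mp hA.eigenvectorUnitary.2
  have hU1 : U * star U = 1 := Matrix.mem_unitaryGroup_iff.mp hA.eigenvectorUnitary.2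
  have hev : ∀ i, |hA.eigenvalues i| ≤ β := by
    intro i
    have hne : (⇑(hA.eigenvectorBasis i) : S → ℝ) ≠ 0 := by
      have h0 := hA.eigenvectorBasis.orthonormal.ne_zero i
      intro h
      apply h0
      ext y
      exact congrFun h y
    exact heig _ _ hne (hA.mulVec_eigenvectorBasis i)
  have hspec : ∀ m : ℕ, A ^ m
      = (U : Matrix S S ℝ) * Matrix.diagonal (fun i => hA.eigenvalues i ^ m)
        * star (U : Matrix S S ℝ) := by
    intro m
    induction m with
    | zero => simp [pow_zero, hU1]
    | succ m ih =>
      have hA1 : A = (U : Matrix S S ℝ) * Matrix.diagonal (fun i => hA.eigenvalues i)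
          * star (U : Matrix S S ℝ) := by
        have := hA.spectral_theorem
        simpa using this
      calc A ^ (m+1) = A ^ m * A := pow_succ A m
        _ = ((U : Matrix S S ℝ) * Matrix.diagonal (fun i => hA.eigenvalues i ^ m)
              * star (U : Matrix S S ℝ)) * ((U : Matrix S S ℝ)
              * Matrix.diagonal (fun i => hA.eigenvalues i) * star (U : Matrix S S ℝ)) := by
            rw [← ih, ← hA1]
        _ = U * (Matrix.diagonal (fun i => hA.eigenvalues i ^ m) * ((star U * U)
              * (Matrix.diagonal (fun i => hA.eigenvalues i) * star U))) := by
            simp only [Matrix.mul_assoc]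
        _ = U * (Matrix.diagonal (fun i => hA.eigenvalues i ^ m)
              * (Matrix.diagonal (fun i => hA.eigenvalues i) * star U)) := by
            rw [hU2, Matrix.one_mul]
        _ = U * ((Matrix.diagonal (fun i => hA.eigenvalues i ^ m)
              * Matrix.diagonal (fun i => hA.eigenvalues i)) * star U) := by
            rw [Matrix.mul_assoc]
        _ = U * Matrix.diagonal (fun i => hA.eigenvalues i ^ (m+1)) * star U := by
            rw [Matrix.diagonal_mul_diagonal, ← Matrix.mul_assoc]
            have h : (fun i => hA.eigenvalues i ^ m * hA.eigenvalues i)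
                = fun i => hA.eigenvalues i ^ (m+1) := funext fun i => (pow_succ _ _).symm
            rw [h]
  have hUrow : ∑ i, U x i ^ 2 = 1 := by
    have h1 : (U * star U) x x = (1 : Matrix S S ℝ) x x := by rw [hU1]
    simp only [Matrix.mul_apply, Matrix.star_apply, star_trivial, Matrix.one_apply_eq] at h1
    rw [← h1]
    exact Finset.sum_congr rfl fun i _ => (sq (U x i)).symm ▸ (pow_two (U x i)).symm ▸ rfl
  have key : (A ^ k * A ^ k) x x = ∑ i, hA.eigenvalues i ^ (2*k) * U x i ^ 2 := by
    have h2 : A ^ k * A ^ k = A ^ (2 * k) := by rw [← pow_add, two_mul]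
    rw [h2, hspec (2*k)]
    simp only [Matrix.mul_apply, Matrix.star_apply, star_trivial, Matrix.diagonal_apply,
      mul_ite, mul_zero, ite_mul, zero_mul, Finset.sum_ite_eq, Finset.sum_ite_eq',
      Finset.mem_univ, if_true]
    exact Finset.sum_congr rfl fun i _ => by ring
  rw [key]
  calc ∑ i, hA.eigenvalues i ^ (2*k) * U x i ^ 2
      ≤ ∑ i, β ^ (2*k) * U x i ^ 2 := by
        refine Finset.sum_le_sum fun i _ => mul_le_mul_of_nonneg_right ?_ (sq_nonneg _)
        rw [pow_mul, pow_mul]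
        refine pow_le_pow_left₀ (sq_nonneg _) ?_ k
        have := abs_le.mp (hev i)
        exact sq_le_sq' this.1 this.2
    _ = β ^ (2*k) := by rw [← Finset.mul_sum, hUrow, mul_one]
    _ = (β ^ k) ^ 2 := by rw [← pow_mul, mul_comm]

open Filter
open Matrix

theorem tv_convergence_bound
    {S : Type*} [Fintype S] [DecidableEq S]
    (K : Matrix S S ℝ) (f : S → ℝ)
    (hK0 : ∀ x y, 0 ≤ K x y) (hK1 : ∀ x, ∑ y, K x y = 1)
    (hf : ∀ x, 0 < f x) (hf1 : ∑ x, f x = 1)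
    (hdb : ∀ x y, K x y * f x = K y x * f y)
    (β : ℝ) (hβ0 : 0 ≤ β) (hβ1 : β < 1)
    -- every eigenvalue of K (as an operator) other than the simple eigenvalue 1
    -- has modulus at most β
    (hβ : ∀ (μ : ℝ) (g : S → ℝ), g ≠ 0 →
        (∀ x, ∑ y, K x y * g y = μ * g x) → μ = 1 ∨ |μ| ≤ β)
    -- 1 is a simple eigenvalue: its eigenfunctions are constant
    (hsimple : ∀ g : S → ℝ, (∀ x, ∑ y, K x y * g y = g x) → ∀ x y, g x = g y) :
    ∀ (n : ℕ) (x : S),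
      2 * ((1 / 2) * ∑ y, |(K ^ n) x y - f y|) ≤ (Real.sqrt (f x))⁻¹ * β ^ n := by
  classical
  set d : S → ℝ := fun x => Real.sqrt (f x) with hd_def
  have hd : ∀ x, 0 < d x := fun x => Real.sqrt_pos.mpr (hf x)
  have hd2 : ∀ x, d x * d x = f x := fun x => Real.mul_self_sqrt (hf x).le
  set M : Matrix S S ℝ := Matrix.of (fun x y => d x * K x y / d y) with hM_def
  set P : Matrix S S ℝ := Matrix.of (fun x y => d x * d y) with hP_def
  have hMa : ∀ x y, M x y = d x * K x y / d y := fun x y => rfl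
  have hPa : ∀ x y, P x y = d x * d y := fun x y => rfl
  -- stationarity
  have hstat : ∀ y, ∑ z, f z * K z y = f y := by
    intro y
    calc ∑ z, f z * K z y = ∑ z, K y z * f y := by
          refine Finset.sum_congr rfl fun z _ => ?_
          rw [mul_comm, hdb]
        _ = f y := by rw [← Finset.sum_mul, hK1, one_mul]
  -- product identities
  have hMP : M * P = P := by
    ext x y
    rw [Matrix.mul_apply, hPa]
    calc ∑ z, M x z * P z y = ∑ z, (d x * d y) * K x z := by
          refine Finset.sum_congr rfl fun z _ => ?_
          rw [hMa, hPa]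
          field_simp [(hd z).ne']
        _ = d x * d y := by rw [← Finset.mul_sum, hK1, mul_one]
  have hPM : P * M = P := by
    ext x y
    rw [Matrix.mul_apply, hPa]
    have hy := hd y
    calc ∑ z, P x z * M z y = ∑ z, (d x / d y) * (f z * K z y) := by
          refine Finset.sum_congr rfl fun z _ => ?_
          rw [hMa, hPa, ← hd2 z]
          field_simp [(hd z).ne', hy.ne']
        _ = (d x / d y) * f y := by rw [← Finset.mul_sum, hstat]
        _ = d x * d y := by rw [← hd2 y]; field_simp [hy.ne']
  have hPP : P * P = P := by
    ext x y
    rw [Matrix.mul_apply, hPa]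
    calc ∑ z, P x z * P z y = ∑ z, (d x * d y) * f z := by
          refine Finset.sum_congr rfl fun z _ => ?_
          rw [hPa, hPa, ← hd2 z]; ring
        _ = d x * d y := by rw [← Finset.mul_sum, hf1, mul_one]
  -- symmetry
  have hMsym : M.IsHermitian := by
    ext x y
    rw [Matrix.conjTranspose_apply, star_trivial, hMa, hMa,
      div_eq_div_iff (hd x).ne' (hd y).ne']
    have h := hdb y x
    rw [← hd2 y, ← hd2 x] at h
    linear_combination h
  have hPsym : P.IsHermitian := by
    ext x y
    rw [Matrix.conjTranspose_apply, star_trivial, hPa, hPa, mul_comm]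
  set B : Matrix S S ℝ := M - P with hB_def
  have hBsym : B.IsHermitian := hMsym.sub hPsym
  -- powers of M
  have hMpow : ∀ (m : ℕ) (x y : S), (M ^ m) x y = d x * (K ^ m) x y / d y := by
    intro m
    induction m with
    | zero =>
      intro x y
      by_cases h : x = y
      · subst h
        simp only [pow_zero, Matrix.one_apply_eq]
        field_simp [(hd x).ne']
      · simp only [pow_zero, Matrix.one_apply_ne h, mul_zero, zero_div]
    | succ m ih =>
      intro x y
      rw [pow_succ, pow_succ, Matrix.mul_apply, Matrix.mul_apply]
      calc ∑ z, (M ^ m) x z * M z y = ∑ z, (d x / d y) * ((K ^ m) x z * K z y) := by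
            refine Finset.sum_congr rfl fun z _ => ?_
            rw [ih, hMa]
            field_simp [(hd z).ne', (hd y).ne', (hd x).ne']
          _ = d x * (∑ z, (K ^ m) x z * K z y) / d y := by
            rw [← Finset.mul_sum]; ring
  have hMPn : ∀ m : ℕ, M ^ m * P = P := by
    intro m
    induction m with
    | zero => rw [pow_zero, Matrix.one_mul]
    | succ m ih => rw [pow_succ, Matrix.mul_assoc, hMP, ih]
  have hBn : ∀ m : ℕ, B ^ (m + 1) = M ^ (m + 1) - P := by
    intro m
    induction m with
    | zero => rw [pow_one, pow_one]
    | succ m ih =>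
      rw [pow_succ, ih, hB_def, Matrix.sub_mul, Matrix.mul_sub, Matrix.mul_sub,
        hMPn, hPM, hPP, ← pow_succ]
      abel
  -- eigenvalue bound for B
  have heigB : ∀ (μ : ℝ) (g : S → ℝ), g ≠ 0 → B *ᵥ g = μ • g → |μ| ≤ β := by
    intro μ g hg hBg
    by_cases hμ : μ = 0
    · rw [hμ, abs_zero]; exact hβ0
    obtain ⟨x0, hx0⟩ : ∃ x, g x ≠ 0 := by
      by_contra h
      push_neg at h
      exact hg (funext fun x => h x)
    have hPB : P * B = 0 := by
      rw [hB_def, Matrix.mul_sub, hPM, hPP, sub_self]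
    have h1 : μ • (P *ᵥ g) = 0 := by
      rw [← Matrix.mulVec_smul, ← hBg, Matrix.mulVec_mulVec, hPB, Matrix.zero_mulVec]
    have hPg : P *ᵥ g = 0 := by
      rcases smul_eq_zero.mp h1 with h | h
      · exact absurd h hμ
      · exact h
    have hc : ∑ z, d z * g z = 0 := by
      have h2 := congrFun hPg x0
      simp only [Matrix.mulVec, dotProduct, Pi.zero_apply] at h2
      have h3 : d x0 * ∑ z, d z * g z = 0 := by
        rw [Finset.mul_sum]
        rw [← h2]
        exact Finset.sum_congr rfl fun z _ => by rw [hPa]; ring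
      exact (mul_eq_zero.mp h3).resolve_left (hd x0).ne'
    have hMg : M *ᵥ g = μ • g := by
      have : B *ᵥ g = M *ᵥ g - P *ᵥ g := Matrix.sub_mulVec M P g
      rw [this, hPg, sub_zero] at hBg
      exact hBg
    set h : S → ℝ := fun z => g z / d z with hh_def
    have hgd : ∀ z, g z = h z * d z := by
      intro z; rw [hh_def]; field_simp [(hd z).ne']
    have hh0 : h ≠ 0 := by
      intro H
      apply hx0
      rw [hgd x0, congrFun H x0, Pi.zero_apply, zero_mul]
    have heq : ∀ x, ∑ y, K x y * h y = μ * h x := by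
      intro x
      have h2 := congrFun hMg x
      simp only [Matrix.mulVec, dotProduct, Pi.smul_apply, smul_eq_mul] at h2
      have h3 : ∑ y, M x y * g y = d x * ∑ y, K x y * h y := by
        rw [Finset.mul_sum]
        refine Finset.sum_congr rfl fun y _ => ?_
        rw [hMa, hh_def]
        field_simp [(hd y).ne']
      rw [h3] at h2
      have h4 : d x * ∑ y, K x y * h y = d x * (μ * h x) := by
        rw [h2, hgd x]; ring
      exact mul_left_cancel₀ (hd x).ne' h4
    rcases hβ μ h hh0 heq with h1eq | hle
    · exfalso
      subst h1eq
      have hconst := hsimple h (by intro x; rw [heq x, one_mul])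
      have : h x0 = 0 := by
        have h5 : ∑ z, d z * g z = h x0 * ∑ z, f z := by
          rw [Finset.mul_sum]
          refine Finset.sum_congr rfl fun z _ => ?_
          rw [hgd z, ← hd2 z, hconst z x0]; ring
        rw [hf1, mul_one] at h5
        rw [← h5]; exact hc
      exact hx0 (by rw [hgd x0, this, zero_mul])
    · exact hle
  -- main estimate
  intro n x
  set N : Matrix S S ℝ := M ^ n - P with hN_def
  have hNsym : N.IsHermitian := (hMsym.pow n).sub hPsym
  have hNa : ∀ y, N x y = d x * (K ^ n) x y / d y - d x * d y := by
    intro y; rw [hN_def, Matrix.sub_apply, hMpow, hPa]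
  have hNN : ∑ y, N x y ^ 2 = (N * N) x x := by
    rw [Matrix.mul_apply]
    refine Finset.sum_congr rfl fun y _ => ?_
    have : N y x = N x y := by
      conv_lhs => rw [← hNsym]
      rw [Matrix.conjTranspose_apply, star_trivial]
    rw [this]; ring
  have hNbound : ∑ y, N x y ^ 2 ≤ (β ^ n) ^ 2 := by
    rw [hNN]
    cases n with
    | zero =>
      have : N * N = N := by
        rw [hN_def, pow_zero, Matrix.sub_mul, Matrix.mul_sub, Matrix.mul_sub,
          Matrix.one_mul, Matrix.one_mul, Matrix.mul_one, hPP]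
        abel
      rw [this, hN_def, pow_zero, Matrix.sub_apply, Matrix.one_apply_eq, hPa, hd2]
      simp only [pow_zero, one_pow]
      linarith [(hf x).le]
    | succ m =>
      have hNB : N = B ^ (m + 1) := (hBn m).symm
      rw [hNB]
      exact diag_even_pow_bound B hBsym β hβ0 heigB (m + 1) x
  -- Cauchy-Schwarz
  have hterm : ∀ y, |(K ^ n) x y - f y| = (d x)⁻¹ * (d y * |N x y|) := by
    intro y
    have h1 : (K ^ n) x y - f y = (d x)⁻¹ * (d y * N x y) := by
      rw [hNa, ← hd2 y]
      field_simp [(hd x).ne', (hd y).ne']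
    rw [h1, abs_mul, abs_mul, abs_of_nonneg (inv_nonneg.mpr (hd x).le),
      abs_of_nonneg (hd y).le]
  have hCS : ∑ y, d y * |N x y| ≤ β ^ n := by
    have h1 : (∑ y, d y * |N x y|) ^ 2 ≤ (∑ y, d y ^ 2) * ∑ y, |N x y| ^ 2 :=
      Finset.sum_mul_sq_le_sq_mul_sq Finset.univ _ _
    have h2 : (∑ y, d y ^ 2) = 1 := by
      rw [← hf1]; exact Finset.sum_congr rfl fun y _ => by rw [sq, hd2]
    have h3 : (∑ y, |N x y| ^ 2) = ∑ y, N x y ^ 2 :=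
      Finset.sum_congr rfl fun y _ => sq_abs _
    rw [h2, h3, one_mul] at h1
    have h4 : (∑ y, d y * |N x y|) ^ 2 ≤ (β ^ n) ^ 2 := h1.trans hNbound
    have h5 : 0 ≤ ∑ y, d y * |N x y| :=
      Finset.sum_nonneg fun y _ => mul_nonneg (hd y).le (abs_nonneg _)
    nlinarith [pow_nonneg hβ0 n]
  have hsum : ∑ y, |(K ^ n) x y - f y| ≤ (d x)⁻¹ * β ^ n := by
    calc ∑ y, |(K ^ n) x y - f y| = (d x)⁻¹ * ∑ y, d y * |N x y| := by
          rw [Finset.mul_sum]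
          exact Finset.sum_congr rfl fun y _ => hterm y
      _ ≤ (d x)⁻¹ * β ^ n :=
          mul_le_mul_of_nonneg_left hCS (inv_nonneg.mpr (hd x).le)
  calc 2 * ((1 / 2) * ∑ y, |(K ^ n) x y - f y|) = ∑ y, |(K ^ n) x y - f y| := by ring
    _ ≤ (Real.sqrt (f x))⁻¹ * β ^ n := hsum
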